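/- arXiv:1512.03766 — 2 statements merged into one kernel-verified Lean document; each statement's English description precedes it below -/
import Mathlib

section
/- Fix u ∈ (0,1]. Define subsets of [0,1] recursively by A_u^1 = [0,u] and, for k ≥ 1, A_u^{k+1} = u·A_u^k ∪ (u + (1−u)·A_u^k), where u·A = {ua : a ∈ A} and u + (1−u)·A = {u + (1−u)a : a ∈ A}. If U is a uniform random variable on [0,1], then the sequence of random variables (1_{A_u^k}(U))_{k≥1} is an i.i.d. sequence of Bernoulli random variables with success probability u; that is, the indicator events {U ∈ A_u^k}, k ≥ 1, are mutually independent and each has probability u. -/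
open MeasureTheory ProbabilityTheory Set Pointwise


lemma image_affine_meas {c r : ℝ} {B : Set ℝ} (hB : MeasurableSet B) :
    MeasurableSet ((fun a => c + r * a) '' B) := by
  rcases eq_or_ne r 0 with rfl | hr
  · rcases B.eq_empty_or_nonempty with rfl | hne
    · simp
    · have h : (fun a : ℝ => c + 0 * a) '' B = {c} := by
        simp only [zero_mul, add_zero]
        exact hne.image_const c
      rw [h]; exact measurableSet_singleton c
  · have h : (fun a => c + r * a) '' B = (fun x => (x - c) / r) ⁻¹' B := by
      ext x
      constructor
      · rintro ⟨a, haB, rfl⟩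
        simpa [hr, mul_comm, mul_div_assoc] using haB
      · intro hx
        exact ⟨(x - c) / r, hx, by field_simp; ring⟩
    rw [h]
    exact ((measurable_id.sub_const c).div_const r) hB

lemma vol_image_affine (c : ℝ) {r : ℝ} (hr : 0 ≤ r) (B : Set ℝ) :
    volume ((fun a => c + r * a) '' B) = ENNReal.ofReal r * volume B := by
  have h : (fun a => c + r * a) '' B = c +ᵥ (r • B) := by
    rw [← Set.image_vadd, ← Set.image_smul, ← Set.image_comp]
    rfl
  rw [h, measure_vadd, Measure.addHaar_smul_of_nonneg volume hr,
    Module.finrank_self, pow_one]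

lemma image_mul_meas {r : ℝ} {B : Set ℝ} (hB : MeasurableSet B) :
    MeasurableSet ((fun a => r * a) '' B) := by
  simpa using image_affine_meas (c := 0) (r := r) hB

lemma vol_image_mul {r : ℝ} (hr : 0 ≤ r) (B : Set ℝ) :
    volume ((fun a => r * a) '' B) = ENNReal.ofReal r * volume B := by
  simpa using vol_image_affine 0 hr B

section Nested
variable {u : ℝ} (hu0 : 0 < u) (hu1 : u ≤ 1) (A : ℕ → Set ℝ)
  (hA1 : A 1 = Set.Icc 0 u)
  (hArec : ∀ k ≥ 1, A (k + 1) =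
      ((fun a => u * a) '' A k) ∪ ((fun a => u + (1 - u) * a) '' A k))

include hu0 hu1 hA1 hArec

lemma nested_subset : ∀ k, 1 ≤ k → A k ⊆ Set.Icc 0 1 := by
  intro k
  induction k with
  | zero => omega
  | succ k ih =>
    intro _
    rcases Nat.eq_zero_or_pos k with h | hk1
    · subst h; rw [hA1]
      exact Set.Icc_subset_Icc le_rfl hu1
    · rw [hArec k hk1]
      apply Set.union_subset
      · rintro x ⟨a, haA, rfl⟩
        have ha := ih hk1 haA
        simp only [Set.mem_Icc] at ha ⊢
        constructor
        · nlinarith [ha.1, ha.2]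
        · nlinarith [ha.1, ha.2]
      · rintro x ⟨a, haA, rfl⟩
        have ha := ih hk1 haA
        simp only [Set.mem_Icc] at ha ⊢
        constructor
        · nlinarith [ha.1, ha.2]
        · nlinarith [ha.1, ha.2]

omit hu0 hu1 in
include hArec in
lemma nested_meas : ∀ k, 1 ≤ k → MeasurableSet (A k) := by
  intro k
  induction k with
  | zero => omega
  | succ k ih =>
    intro _
    rcases Nat.eq_zero_or_pos k with h | hk1
    · subst h; rw [hA1]; exact measurableSet_Icc
    · rw [hArec k hk1]
      exact (image_mul_meas (ih hk1)).union (image_affine_meas (ih hk1))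

lemma nested_key : ∀ n (S : Finset ℕ), (∀ k ∈ S, 1 ≤ k) → S.sum id ≤ n →
    volume.restrict (Set.Icc (0:ℝ) 1) (⋂ k ∈ S, A k) = ENNReal.ofReal u ^ S.card := by
  have hν : ∀ s : Set ℝ, s ⊆ Set.Icc 0 1 →
      volume.restrict (Set.Icc (0:ℝ) 1) s = volume s := fun s hs => by
    rw [Measure.restrict_apply' measurableSet_Icc, Set.inter_eq_left.mpr hs]
  have hνle : ∀ s : Set ℝ, volume.restrict (Set.Icc (0:ℝ) 1) s ≤ volume s :=
    fun s => Measure.restrict_le_self s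
  have hνu : volume.restrict (Set.Icc (0:ℝ) 1) {u} = 0 :=
    le_antisymm (le_trans (hνle {u}) (by simp)) zero_le
  have hu01 : (0:ℝ) ≤ 1 - u := by linarith
  intro n
  induction n using Nat.strong_induction_on with
  | _ n IH =>
    intro S hS hsum
    rcases S.eq_empty_or_nonempty with rfl | hSne
    · simp [Measure.restrict_apply_univ, Real.volume_Icc]
    by_cases h1 : 1 ∈ S
    · -- case 1 ∈ S
      set T := S.erase 1 with hT
      rcases T.eq_empty_or_nonempty with hTe | hTne
      · -- S = {1}
        have hS1 : S = {1} := by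
          rcases (Finset.erase_eq_empty_iff S 1).mp hTe with h | h
          · exact absurd h (Finset.nonempty_iff_ne_empty.mp hSne)
          · exact h
        subst hS1
        rw [show ⋂ k ∈ ({1} : Finset ℕ), A k = A 1 by simp, hA1,
          hν _ (Set.Icc_subset_Icc le_rfl hu1)]
        simp [Real.volume_Icc, hu0.le]
      · set S' := T.image (· - 1) with hS'
        have hT2 : ∀ k ∈ T, 2 ≤ k := fun k hk => by
          have h1k := hS k (Finset.mem_of_mem_erase hk)
          have := Finset.ne_of_mem_erase hk
          omega
        have hS'1 : ∀ j ∈ S', 1 ≤ j := by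
          intro j hj
          rw [hS', Finset.mem_image] at hj
          obtain ⟨k, hk, rfl⟩ := hj
          have := hT2 k hk; omega
        have hinj : Set.InjOn (· - 1) (T : Set ℕ) := by
          intro a ha b hb h
          have := hT2 a (by exact_mod_cast ha); have := hT2 b (by exact_mod_cast hb)
          simp only at h; omega
        have hcard : S'.card = T.card := Finset.card_image_of_injOn hinj
        have hiT : ⋂ k ∈ T, A k = ⋂ j ∈ S', A (j + 1) := by
          ext x
          simp only [Set.mem_iInter, hS', Finset.mem_image]
          constructor
          · rintro h j ⟨k, hk, rfl⟩
            have hkk : k - 1 + 1 = k := by have := hT2 k hk; omega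
            rw [hkk]; exact h k hk
          · intro h k hk
            have h2 := hT2 k hk
            have := h (k - 1) ⟨k, hk, rfl⟩
            rwa [Nat.sub_add_cancel (by omega)] at this
        set I := ⋂ j ∈ S', A j with hI
        obtain ⟨j0, hj0⟩ := hTne.image (· - 1)
        have hj0' : j0 ∈ S' := hj0
        have hIsub : I ⊆ Set.Icc 0 1 := by
          refine subset_trans ?_ (nested_subset hu0 hu1 A hA1 hArec j0 (hS'1 j0 hj0'))
          exact Set.biInter_subset_of_mem hj0'
        have hImeas : MeasurableSet I :=
          MeasurableSet.biInter (S' : Set ℕ).to_countable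
            (fun j hj => nested_meas A hA1 hArec j (hS'1 j hj))
        -- sums
        have hsum1 : S.sum id = 1 + T.sum id := (Finset.add_sum_erase S id h1).symm
        have hsum2 : T.sum id = S'.sum id + T.card := by
          rw [hS', Finset.sum_image hinj]
          have h2 : T.sum id = ∑ x ∈ T, (x - 1 + 1) :=
            Finset.sum_congr rfl fun x hx => by have := hT2 x hx; simp only [id_eq]; omega
          rw [h2, Finset.sum_add_distrib, Finset.sum_const, smul_eq_mul, mul_one]
          simp only [id_eq]
        have hTcard1 : 1 ≤ T.card := Finset.card_pos.mpr hTne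
        have hνI : volume.restrict (Set.Icc (0:ℝ) 1) I = ENNReal.ofReal u ^ S'.card := by
          refine IH (n - 1) (by omega) S' hS'1 (by omega)
        -- set identification
        have hL : ⋂ k ∈ S, A k = Set.Icc 0 u ∩ ⋂ j ∈ S', A (j + 1) := by
          conv_lhs => rw [← Finset.insert_erase h1]
          rw [Finset.set_biInter_insert, hA1, ← hT, hiT]
        have hmemI : ∀ a, a ∈ I ↔ ∀ j ∈ S', a ∈ A j := by
          intro a; simp [hI, Set.mem_iInter]
        have hsub1 : (fun a => u * a) '' I ⊆ ⋂ k ∈ S, A k := by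
          rw [hL]
          rintro x ⟨a, haI, rfl⟩
          dsimp only
          have ha := hIsub haI
          simp only [Set.mem_Icc] at ha
          constructor
          · constructor
            · exact mul_nonneg hu0.le ha.1
            · nlinarith [ha.1, ha.2]
          · simp only [Set.mem_iInter]
            intro j hj
            rw [hArec j (hS'1 j hj)]
            exact Or.inl ⟨a, (hmemI a).mp haI j hj, rfl⟩
        have hsub2 : ⋂ k ∈ S, A k ⊆ ((fun a => u * a) '' I) ∪ {u} := by
          rw [hL]
          rintro x ⟨hxIcc, hxI⟩
          simp only [Set.mem_iInter] at hxI
          rcases eq_or_lt_of_le hxIcc.2 with heq | hlt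
          · exact Or.inr heq
          · left
            refine ⟨x / u, (hmemI _).mpr fun j hj => ?_, by dsimp only; field_simp⟩
            have hx := hxI j hj
            rw [hArec j (hS'1 j hj)] at hx
            rcases hx with ⟨a, haA, hax⟩ | ⟨a, haA, hax⟩
            · have hax' : u * a = x := hax
              have : x / u = a := by field_simp [← hax', mul_comm]; linarith
              rwa [this]
            · exfalso
              have hax' : u + (1 - u) * a = x := hax
              have ha := nested_subset hu0 hu1 A hA1 hArec j (hS'1 j hj) haA
              simp only [Set.mem_Icc] at ha
              nlinarith [mul_nonneg hu01 ha.1]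
        -- measure computation
        have hT1sub : (fun a => u * a) '' I ⊆ Set.Icc 0 1 := by
          rintro x ⟨a, haI, rfl⟩
          dsimp only
          have ha := hIsub haI
          simp only [Set.mem_Icc] at ha ⊢
          exact ⟨mul_nonneg hu0.le ha.1, by nlinarith [ha.1, ha.2]⟩
        have hle : volume.restrict (Set.Icc (0:ℝ) 1) (⋂ k ∈ S, A k)
            ≤ volume.restrict (Set.Icc (0:ℝ) 1) ((fun a => u * a) '' I) := by
          calc volume.restrict (Set.Icc (0:ℝ) 1) (⋂ k ∈ S, A k)
              ≤ volume.restrict (Set.Icc (0:ℝ) 1) (((fun a => u * a) '' I) ∪ {u}) :=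
                measure_mono hsub2
            _ ≤ volume.restrict (Set.Icc (0:ℝ) 1) ((fun a => u * a) '' I)
                + volume.restrict (Set.Icc (0:ℝ) 1) {u} := measure_union_le _ _
            _ = volume.restrict (Set.Icc (0:ℝ) 1) ((fun a => u * a) '' I) := by
                rw [hνu, add_zero]
        have heq : volume.restrict (Set.Icc (0:ℝ) 1) (⋂ k ∈ S, A k)
            = volume.restrict (Set.Icc (0:ℝ) 1) ((fun a => u * a) '' I) :=
          le_antisymm hle (measure_mono hsub1)
        rw [heq, hν _ hT1sub, vol_image_mul hu0.le, ← hν _ hIsub, hνI, ← pow_succ']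
        congr 1
        rw [hcard, Finset.card_erase_of_mem h1] at *
        have := Finset.card_pos.mpr hSne
        omega
    · -- case 1 ∉ S
      set S' := S.image (· - 1) with hS'
      have hT2 : ∀ k ∈ S, 2 ≤ k := fun k hk => by
        have := hS k hk
        rcases Nat.eq_or_lt_of_le this with h | h
        · exact absurd (h ▸ hk) (by simpa [← h] using h1)
        · omega
      have hS'1 : ∀ j ∈ S', 1 ≤ j := by
        intro j hj
        rw [hS', Finset.mem_image] at hj
        obtain ⟨k, hk, rfl⟩ := hj
        have := hT2 k hk; omega
      have hinj : Set.InjOn (· - 1) (S : Set ℕ) := by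
        intro a ha b hb h
        have := hT2 a (by exact_mod_cast ha); have := hT2 b (by exact_mod_cast hb)
        simp only at h; omega
      have hcard : S'.card = S.card := Finset.card_image_of_injOn hinj
      have hiT : ⋂ k ∈ S, A k = ⋂ j ∈ S', A (j + 1) := by
        ext x
        simp only [Set.mem_iInter, hS', Finset.mem_image]
        constructor
        · rintro h j ⟨k, hk, rfl⟩
          have hkk : k - 1 + 1 = k := by have := hT2 k hk; omega
          rw [hkk]; exact h k hk
        · intro h k hk
          have h2 := hT2 k hk
          have := h (k - 1) ⟨k, hk, rfl⟩
          rwa [Nat.sub_add_cancel (by omega)] at this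
      set I := ⋂ j ∈ S', A j with hI
      obtain ⟨j0, hj0⟩ := hSne.image (· - 1)
      have hj0' : j0 ∈ S' := hj0
      have hIsub : I ⊆ Set.Icc 0 1 := by
        refine subset_trans ?_ (nested_subset hu0 hu1 A hA1 hArec j0 (hS'1 j0 hj0'))
        exact Set.biInter_subset_of_mem hj0'
      have hImeas : MeasurableSet I :=
        MeasurableSet.biInter (S' : Set ℕ).to_countable
          (fun j hj => nested_meas A hA1 hArec j (hS'1 j hj))
      have hmemI : ∀ a, a ∈ I ↔ ∀ j ∈ S', a ∈ A j := by
        intro a; simp [hI, Set.mem_iInter]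
      -- sums
      have hsum2 : S.sum id = S'.sum id + S.card := by
        rw [hS', Finset.sum_image hinj]
        have h2 : S.sum id = ∑ x ∈ S, (x - 1 + 1) :=
          Finset.sum_congr rfl fun x hx => by have := hT2 x hx; simp only [id_eq]; omega
        rw [h2, Finset.sum_add_distrib, Finset.sum_const, smul_eq_mul, mul_one]
        simp only [id_eq]
      have hScard1 : 1 ≤ S.card := Finset.card_pos.mpr hSne
      have hνI : volume.restrict (Set.Icc (0:ℝ) 1) I = ENNReal.ofReal u ^ S'.card :=
        IH (n - 1) (by omega) S' hS'1 (by omega)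
      -- set identification
      set B1 := (fun a => u * a) '' I with hB1
      set B0 := (fun a => u + (1 - u) * a) '' I with hB0
      have hsub1 : B1 ∪ B0 ⊆ ⋂ k ∈ S, A k := by
        rw [hiT]
        apply Set.union_subset
        · rintro x ⟨a, haI, rfl⟩
          simp only [Set.mem_iInter]
          intro j hj
          rw [hArec j (hS'1 j hj)]
          exact Or.inl ⟨a, (hmemI a).mp haI j hj, rfl⟩
        · rintro x ⟨a, haI, rfl⟩
          simp only [Set.mem_iInter]
          intro j hj
          rw [hArec j (hS'1 j hj)]
          exact Or.inr ⟨a, (hmemI a).mp haI j hj, rfl⟩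
      have hsub2 : ⋂ k ∈ S, A k ⊆ (B1 ∪ B0) ∪ {u} := by
        rw [hiT]
        intro x hxI
        simp only [Set.mem_iInter] at hxI
        have hx01 : x ∈ Set.Icc (0:ℝ) 1 := by
          have := hxI j0 hj0'
          exact nested_subset hu0 hu1 A hA1 hArec (j0 + 1) (by omega) this
        simp only [Set.mem_Icc] at hx01
        rcases lt_trichotomy x u with hlt | heq | hgt
        · left; left
          refine ⟨x / u, (hmemI _).mpr fun j hj => ?_, by dsimp only; field_simp⟩
          have hx := hxI j hj
          rw [hArec j (hS'1 j hj)] at hx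
          rcases hx with ⟨a, haA, hax⟩ | ⟨a, haA, hax⟩
          · have hax' : u * a = x := hax
            have : x / u = a := by field_simp [← hax', mul_comm]; linarith
            rwa [this]
          · exfalso
            have hax' : u + (1 - u) * a = x := hax
            have ha := nested_subset hu0 hu1 A hA1 hArec j (hS'1 j hj) haA
            simp only [Set.mem_Icc] at ha
            nlinarith [mul_nonneg hu01 ha.1]
        · exact Or.inr heq
        · left; right
          have hu1' : u < 1 := lt_of_lt_of_le hgt hx01.2
          have h1u : (0:ℝ) < 1 - u := by linarith
          refine ⟨(x - u) / (1 - u), (hmemI _).mpr fun j hj => ?_, by dsimp only; field_simp; ring⟩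
          have hx := hxI j hj
          rw [hArec j (hS'1 j hj)] at hx
          rcases hx with ⟨a, haA, hax⟩ | ⟨a, haA, hax⟩
          · exfalso
            have hax' : u * a = x := hax
            have ha := nested_subset hu0 hu1 A hA1 hArec j (hS'1 j hj) haA
            simp only [Set.mem_Icc] at ha
            nlinarith [mul_le_mul_of_nonneg_left ha.2 hu0.le]
          · have hax' : u + (1 - u) * a = x := hax
            have : (x - u) / (1 - u) = a := by
              rw [← hax']; field_simp; ring
            rwa [this]
      -- measure computation
      have hB1sub : B1 ⊆ Set.Icc 0 1 := by
        rintro x ⟨a, haI, rfl⟩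
        dsimp only
        have ha := hIsub haI
        simp only [Set.mem_Icc] at ha ⊢
        exact ⟨mul_nonneg hu0.le ha.1, by nlinarith [ha.1, ha.2]⟩
      have hB0sub : B0 ⊆ Set.Icc 0 1 := by
        rintro x ⟨a, haI, rfl⟩
        dsimp only
        have ha := hIsub haI
        simp only [Set.mem_Icc] at ha ⊢
        constructor
        · nlinarith [ha.1, ha.2]
        · nlinarith [ha.1, ha.2]
      have hdisj : B1 ∩ B0 ⊆ {u} := by
        rintro x ⟨⟨a, haI, rfl⟩, ⟨b, hbI, hbx⟩⟩
        have ha := hIsub haI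
        have hb := hIsub hbI
        simp only [Set.mem_Icc] at ha hb
        simp only [Set.mem_singleton_iff]
        have hbx' : u + (1 - u) * b = u * a := hbx
        have h1' : u * a ≤ u := by nlinarith [ha.2]
        have h2' : u ≤ u * a := by nlinarith [mul_nonneg hu01 hb.1]
        linarith
      have hB0meas : MeasurableSet B0 := image_affine_meas hImeas
      have hunion : volume.restrict (Set.Icc (0:ℝ) 1) (B1 ∪ B0)
          = volume.restrict (Set.Icc (0:ℝ) 1) B1 + volume.restrict (Set.Icc (0:ℝ) 1) B0 := by
        refine measure_union₀ hB0meas.nullMeasurableSet ?_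
        exact le_antisymm (le_trans (measure_mono hdisj) (le_of_eq hνu)) zero_le
      have hle : volume.restrict (Set.Icc (0:ℝ) 1) (⋂ k ∈ S, A k)
          ≤ volume.restrict (Set.Icc (0:ℝ) 1) (B1 ∪ B0) := by
        calc volume.restrict (Set.Icc (0:ℝ) 1) (⋂ k ∈ S, A k)
            ≤ volume.restrict (Set.Icc (0:ℝ) 1) ((B1 ∪ B0) ∪ {u}) := measure_mono hsub2
          _ ≤ volume.restrict (Set.Icc (0:ℝ) 1) (B1 ∪ B0)
              + volume.restrict (Set.Icc (0:ℝ) 1) {u} := measure_union_le _ _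
          _ = volume.restrict (Set.Icc (0:ℝ) 1) (B1 ∪ B0) := by rw [hνu, add_zero]
      have heq : volume.restrict (Set.Icc (0:ℝ) 1) (⋂ k ∈ S, A k)
          = volume.restrict (Set.Icc (0:ℝ) 1) (B1 ∪ B0) :=
        le_antisymm hle (measure_mono hsub1)
      have hvolB : volume.restrict (Set.Icc (0:ℝ) 1) (B1 ∪ B0)
          = volume.restrict (Set.Icc (0:ℝ) 1) I := by
        rw [hunion, hν _ hB1sub, hν _ hB0sub, hν _ hIsub, hB1, hB0, vol_image_mul hu0.le,
          vol_image_affine u hu01, ← add_mul, ← ENNReal.ofReal_add hu0.le hu01]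
        norm_num
      rw [heq, hvolB, hνI, hcard]
end Nested


/-- Fix `u ∈ (0,1]` and define `A_u^1 = [0,u]`, `A_u^{k+1} = u·A_u^k ∪ (u + (1-u)·A_u^k)`.
If `U` is uniformly distributed on `[0,1]`, then the indicator events `{U ∈ A_u^k}`, `k ≥ 1`,
are mutually independent and each has probability `u`; i.e. `(1_{A_u^k}(U))_{k ≥ 1}` is an
i.i.d. sequence of Bernoulli(u) random variables. -/
theorem uniform_nested_sets_iid_bernoulli {Ω : Type*} [MeasurableSpace Ω] {μ : Measure Ω}
    [IsProbabilityMeasure μ] {u : ℝ} (hu0 : 0 < u) (hu1 : u ≤ 1)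
    (U : Ω → ℝ) (hUmeas : Measurable U)
    (hUunif : μ.map U = volume.restrict (Set.Icc (0 : ℝ) 1))
    (A : ℕ → Set ℝ) (hA1 : A 1 = Set.Icc 0 u)
    (hArec : ∀ k ≥ 1, A (k + 1) =
      ((fun a => u * a) '' A k) ∪ ((fun a => u + (1 - u) * a) '' A k)) :
    iIndepSet (fun k : ℕ => U ⁻¹' A (k + 1)) μ ∧
      ∀ k ≥ 1, μ (U ⁻¹' A k) = ENNReal.ofReal u := by
  have hmeas : ∀ k, 1 ≤ k → MeasurableSet (A k) := nested_meas A hA1 hArec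
  have hsingle : ∀ k, 1 ≤ k → μ (U ⁻¹' A k) = ENNReal.ofReal u := by
    intro k hk
    rw [← Measure.map_apply hUmeas (hmeas k hk), hUunif]
    have h := nested_key hu0 hu1 A hA1 hArec k {k}
      (by intro j hj; simp at hj; omega) (by simp)
    simpa using h
  refine ⟨?_, fun k hk => hsingle k hk⟩
  rw [iIndepSet_iff_meas_biInter (fun k => hUmeas (hmeas (k + 1) (by omega)))]
  intro s
  have h1 : (⋂ i ∈ s, U ⁻¹' A (i + 1)) = U ⁻¹' (⋂ i ∈ s, A (i + 1)) := by
    simp [Set.preimage_iInter]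
  have hmeasI : MeasurableSet (⋂ i ∈ s, A (i + 1)) :=
    MeasurableSet.biInter (s : Set ℕ).to_countable fun i _ => hmeas (i + 1) (by omega)
  rw [h1, ← Measure.map_apply hUmeas hmeasI, hUunif]
  have hset : (⋂ i ∈ s, A (i + 1)) = ⋂ k ∈ s.image (· + 1), A k := by
    ext x
    simp only [Set.mem_iInter, Finset.mem_image]
    constructor
    · rintro h k ⟨i, hi, rfl⟩
      exact h i hi
    · intro h i hi
      exact h (i + 1) ⟨i, hi, rfl⟩
  have hinj : Set.InjOn (· + 1) (s : Set ℕ) := fun a _ b _ h => by simpa using h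
  rw [hset, nested_key hu0 hu1 A hA1 hArec ((s.image (· + 1)).sum id) _
    (fun k hk => by simp only [Finset.mem_image] at hk; omega) le_rfl,
    Finset.card_image_of_injOn hinj,
    Finset.prod_congr rfl (fun i _ => hsingle (i + 1) (by omega)), Finset.prod_const]
end

section
/- Let d ≥ 1, u ∈ (0,1], R > 0, and let μ be a finite measure on (0,R]. For n ∈ ℕ let μ^n(B) = μ(n^{1/2}B) and define m_n(dz) = n u ∫_{(0,R/√n]} n^{d/2} (V_r(0,z)/V_r) μ^n(dr) dz on ℝ^d, where V_r = vol(B_r(0)) and V_r(0,z) = vol(B_r(0) ∩ B_r(z)). Then the second moment of m_n is independent of n: for every n, ∫_{ℝ^d} |z|² m_n(dz) = u ∫_{ℝ^d} ∫_{(0,R]} |z|² (V_r(0,z)/V_r) μ(dr) dz. -/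
open MeasureTheory
open scoped ENNReal Pointwise

/-- The second moment of the rescaled jump intensity `m_n` of a single lineage in the
SΛFV dual does not depend on `n`: with `μ^n` the pushforward of `μ` under `r ↦ r/√n`,
`∫ |z|² m_n(dz) = u ∫ ∫ |z|² (V_r(0,z)/V_r) μ(dr) dz` for every `n`. -/
theorem slfv_jump_intensity_second_moment (d : ℕ) (hd : 1 ≤ d) {u : ℝ} (hu0 : 0 < u)
    (hu1 : u ≤ 1) {R : ℝ} (hR : 0 < R) (μ : Measure ℝ) [IsFiniteMeasure μ]
    (hsupp : μ (Set.Ioc 0 R)ᶜ = 0) (n : ℕ) (hn : 1 ≤ n) :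
    ∫⁻ (z : EuclideanSpace ℝ (Fin d)),
        ENNReal.ofReal (‖z‖ ^ 2) * ((n : ℝ≥0∞) * ENNReal.ofReal u *
          ∫⁻ r, ENNReal.ofReal ((n : ℝ) ^ ((d : ℝ) / 2)) *
              (volume (Metric.closedBall (0 : EuclideanSpace ℝ (Fin d)) r
                  ∩ Metric.closedBall z r)
                / volume (Metric.closedBall (0 : EuclideanSpace ℝ (Fin d)) r))
            ∂(μ.map (fun r => r / Real.sqrt n)))
      = ENNReal.ofReal u *
          ∫⁻ (z : EuclideanSpace ℝ (Fin d)),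
            ∫⁻ r, ENNReal.ofReal (‖z‖ ^ 2) *
                (volume (Metric.closedBall (0 : EuclideanSpace ℝ (Fin d)) r
                    ∩ Metric.closedBall z r)
                  / volume (Metric.closedBall (0 : EuclideanSpace ℝ (Fin d)) r))
              ∂μ := by
  set E := EuclideanSpace ℝ (Fin d) with hE
  set F : E → ℝ → ℝ≥0∞ := fun z r =>
    volume (Metric.closedBall (0 : E) r ∩ Metric.closedBall z r)
      / volume (Metric.closedBall (0 : E) r) with hF
  set s : ℝ := Real.sqrt n with hs_def
  have hn0 : (0 : ℝ) < n := by exact_mod_cast hn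
  have hs : 0 < s := Real.sqrt_pos.2 hn0
  set N : ℝ := (n : ℝ) ^ ((d : ℝ) / 2) with hN_def
  have hN : 0 < N := Real.rpow_pos_of_pos hn0 _
  have hsd : s ^ d = N := by
    rw [hs_def, hN_def, Real.sqrt_eq_rpow, ← Real.rpow_natCast ((n:ℝ) ^ ((1:ℝ)/2)) d,
      ← Real.rpow_mul hn0.le]
    ring_nf
  have hfr : Module.finrank ℝ E = d := finrank_euclideanSpace_fin
  show (∫⁻ z : E, ENNReal.ofReal (‖z‖ ^ 2) * ((n : ℝ≥0∞) * ENNReal.ofReal u *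
          ∫⁻ r, ENNReal.ofReal N * F z r ∂(μ.map (fun r => r / s))))
      = ENNReal.ofReal u * ∫⁻ z : E, ∫⁻ r, ENNReal.ofReal (‖z‖ ^ 2) * F z r ∂μ
  -- measurability in r
  have hFmeas : ∀ z : E, Measurable (F z) := by
    intro z
    have h1 : Measurable fun r : ℝ =>
        volume (Metric.closedBall (0 : E) r ∩ Metric.closedBall z r) :=
      Monotone.measurable (fun a b hab => measure_mono
        (Set.inter_subset_inter (Metric.closedBall_subset_closedBall hab)
          (Metric.closedBall_subset_closedBall hab)))
    have h2 : Measurable fun r : ℝ => volume (Metric.closedBall (0 : E) r) :=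
      Monotone.measurable (fun a b hab => measure_mono
        (Metric.closedBall_subset_closedBall hab))
    exact h1.div h2
  -- scaling identity for F
  have hFscale : ∀ (z : E) (r : ℝ), F z (r / s) = F (s • z) r := by
    intro z r
    have hsinv : (s⁻¹ : ℝ) ≠ 0 := inv_ne_zero hs.ne'
    have e1 : Metric.closedBall (0 : E) (r / s) = s⁻¹ • Metric.closedBall (0 : E) r := by
      rw [smul_closedBall' hsinv, smul_zero, Real.norm_eq_abs, abs_of_pos (inv_pos.2 hs),
        div_eq_inv_mul]
    have e2 : Metric.closedBall z (r / s) = s⁻¹ • Metric.closedBall (s • z) r := by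
      rw [smul_closedBall' hsinv, smul_smul, inv_mul_cancel₀ hs.ne', one_smul,
        Real.norm_eq_abs, abs_of_pos (inv_pos.2 hs), div_eq_inv_mul]
    have hpos : (0 : ℝ) < (s⁻¹) ^ Module.finrank ℝ E := pow_pos (inv_pos.2 hs) _
    have hc0 : ENNReal.ofReal |(s⁻¹) ^ Module.finrank ℝ E| ≠ 0 :=
      (ENNReal.ofReal_pos.2 (abs_pos.2 hpos.ne')).ne'
    rw [hF]
    simp only
    rw [e1, e2, ← Set.smul_set_inter₀ hsinv, Measure.addHaar_smul, Measure.addHaar_smul,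
      ENNReal.mul_div_mul_left _ _ hc0 ENNReal.ofReal_ne_top]
  -- rewrite inner integral via the pushforward
  have hmap : ∀ z : E,
      (∫⁻ r, ENNReal.ofReal N * F z r ∂(μ.map (fun r => r / s)))
        = ∫⁻ r, ENNReal.ofReal N * F (s • z) r ∂μ := by
    intro z
    rw [lintegral_map' (((hFmeas z).const_mul (ENNReal.ofReal N)).aemeasurable)
      ((by fun_prop : Measurable fun r : ℝ => r / s).aemeasurable)]
    exact lintegral_congr fun r => by rw [hFscale z r]
  -- abbreviations
  set J : E → ℝ≥0∞ := fun w => ∫⁻ r, F w r ∂μ with hJ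
  set G : E → ℝ≥0∞ := fun w => ENNReal.ofReal (‖w‖ ^ 2) * J w with hG
  have hNne : ENNReal.ofReal N ≠ ⊤ := ENNReal.ofReal_ne_top
  have hnne : (n : ℝ≥0∞) ≠ 0 := Nat.cast_ne_zero.2 (Nat.one_le_iff_ne_zero.mp hn)
  have hinner : ∀ z : E,
      ENNReal.ofReal (‖z‖ ^ 2) * ((n : ℝ≥0∞) * ENNReal.ofReal u *
          ∫⁻ r, ENNReal.ofReal N * F z r ∂(μ.map (fun r => r / s)))
        = ((n : ℝ≥0∞) * ENNReal.ofReal u * ENNReal.ofReal N * ((n : ℝ≥0∞))⁻¹)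
            * G (s • z) := by
    intro z
    rw [hmap z, lintegral_const_mul' _ _ hNne]
    have hnorm : ENNReal.ofReal (‖s • z‖ ^ 2) = (n : ℝ≥0∞) * ENNReal.ofReal (‖z‖ ^ 2) := by
      rw [norm_smul, Real.norm_eq_abs, abs_of_pos hs, mul_pow, hs_def, Real.sq_sqrt hn0.le,
        ENNReal.ofReal_mul hn0.le, ENNReal.ofReal_natCast]
    have hznorm : ENNReal.ofReal (‖z‖ ^ 2)
        = ((n : ℝ≥0∞))⁻¹ * ENNReal.ofReal (‖s • z‖ ^ 2) := by
      rw [hnorm, ← mul_assoc, ENNReal.inv_mul_cancel hnne (ENNReal.natCast_ne_top n), one_mul]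
    simp only [hG, hJ]
    rw [hznorm]
    ring
  rw [lintegral_congr hinner]
  rw [lintegral_const_mul' _ _ (by
    exact ENNReal.mul_ne_top (ENNReal.mul_ne_top
      (ENNReal.mul_ne_top (ENNReal.natCast_ne_top n) ENNReal.ofReal_ne_top) hNne)
      (ENNReal.inv_ne_top.2 hnne))]
  -- change of variables z ↦ s • z
  have hcov : (∫⁻ z : E, G (s • z)) = ENNReal.ofReal ((s ^ d)⁻¹) * ∫⁻ w : E, G w := by
    have := MeasureTheory.lintegral_map_equiv (μ := (volume : Measure E)) G
      (MeasurableEquiv.smul₀ s hs.ne')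
    have hcoe : ⇑(MeasurableEquiv.smul₀ (α := E) s hs.ne') = (s • ·) := rfl
    rw [hcoe] at this
    rw [← this, Measure.map_addHaar_smul (volume : Measure E) hs.ne', lintegral_smul_measure,
      hfr, abs_of_pos (by positivity), smul_eq_mul]
  rw [hcov, hsd]
  -- collapse the constants
  have hNne0 : ENNReal.ofReal N ≠ 0 := by simp [ENNReal.ofReal_eq_zero, not_le, hN]
  have hconst : (n : ℝ≥0∞) * ENNReal.ofReal u * ENNReal.ofReal N * ((n : ℝ≥0∞))⁻¹
      * ENNReal.ofReal (N⁻¹) = ENNReal.ofReal u := by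
    rw [ENNReal.ofReal_inv_of_pos hN]
    calc (n : ℝ≥0∞) * ENNReal.ofReal u * ENNReal.ofReal N * ((n : ℝ≥0∞))⁻¹
        * (ENNReal.ofReal N)⁻¹
        = ((n : ℝ≥0∞) * ((n : ℝ≥0∞))⁻¹) * (ENNReal.ofReal N * (ENNReal.ofReal N)⁻¹)
            * ENNReal.ofReal u := by ring
      _ = ENNReal.ofReal u := by
          rw [ENNReal.mul_inv_cancel hnne (ENNReal.natCast_ne_top n),
            ENNReal.mul_inv_cancel hNne0 hNne, one_mul, one_mul]
  rw [← mul_assoc, hconst]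
  -- identify ∫ G with the right-hand side
  congr 1
  refine lintegral_congr fun z => ?_
  simp only [hG, hJ]
  rw [← lintegral_const_mul' _ _ (ENNReal.ofReal_ne_top)]
end
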